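/- Let N ≥ 1 be an integer, d = 2N+1, μ > 0, t ∈ ℝ, let λ = (λ_{−N},…,λ_N) ∈ ℝ^{2N+1} be a fixed real vector and set Ω(k,ℓ,m,n) := λ_k − λ_ℓ + λ_m − λ_n. Let A : [−1,1] → ℂ be any function, let Ψ = (ψ_{jk})_{j,k ∈ {−N,…,N}} be Haar-distributed on U(2N+1), and define the first Duhamel iterate profile f¹_k(t) := −i (μ²/N) ∑_{ℓ,m,n = −N}^{N} (∫_0^t e^{i s Ω(k,ℓ,m,n)} ds) · γ(k,ℓ,m,n) · A(ℓ/N) · conj(A(m/N)) · A(n/N). Then for every k ∈ {−N,…,N}: Re( conj(A(k/N)) · E[ f¹_k(t) ] ) = 0. -/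

import Mathlib

open MeasureTheory

/-- The centered fourth-order eigenvector observable
`γ(k,ℓ,m,n) = ∑_j conj(ψ_{jk}) ψ_{jℓ} conj(ψ_{jm}) ψ_{jn} − (1/d)1_{k=ℓ,m=n} − (1/d)1_{k=n,ℓ=m}`. -/
noncomputable def gam {d : ℕ} (Ψ : Matrix (Fin d) (Fin d) ℂ) (k l m n : Fin d) : ℂ :=
  (∑ j, (starRingEnd ℂ) (Ψ j k) * Ψ j l * (starRingEnd ℂ) (Ψ j m) * Ψ j n) -
    (1 / (d : ℂ)) * (if k = l ∧ m = n then 1 else 0) -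
    (1 / (d : ℂ)) * (if k = n ∧ l = m then 1 else 0)

section Aux

variable {d : ℕ}

instance stmt19_TG : IsTopologicalGroup (Matrix.unitaryGroup (Fin d) ℂ) where
  continuous_inv := by
    rw [continuous_induced_rng]
    have : (Subtype.val ∘ fun u : Matrix.unitaryGroup (Fin d) ℂ => u⁻¹) =
        (fun M : Matrix (Fin d) (Fin d) ℂ => star M) ∘ Subtype.val := by
      funext u; simp [Matrix.UnitaryGroup.inv_val]
    rw [this]
    exact continuous_star.comp continuous_subtype_val

instance stmt19_CS : CompactSpace (Matrix.unitaryGroup (Fin d) ℂ) := by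
  apply isCompact_iff_compactSpace.mp
  apply IsCompact.of_isClosed_subset
    (isCompact_univ_pi (fun _ => isCompact_univ_pi (fun _ =>
      ProperSpace.isCompact_closedBall (0:ℂ) 1)))
  · have : (Matrix.unitaryGroup (Fin d) ℂ : Set (Matrix (Fin d) (Fin d) ℂ)) =
        (fun M : Matrix (Fin d) (Fin d) ℂ => M * star M) ⁻¹' {1} := by
      ext M; simp [Matrix.mem_unitaryGroup_iff]
    rw [this]
    exact IsClosed.preimage (by continuity) isClosed_singleton
  · intro M hM
    simp only [Set.mem_pi, Set.mem_univ, forall_true_left, Metric.mem_closedBall,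
      dist_zero_right, true_implies]
    intro i j
    exact entry_norm_bound_of_unitary hM i j

lemma stmt19_gam_continuous (k l m n : Fin d) :
    Continuous (fun Ψ : Matrix.unitaryGroup (Fin d) ℂ => gam Ψ.1 k l m n) := by
  have hent : ∀ i j, Continuous fun Ψ : Matrix.unitaryGroup (Fin d) ℂ => Ψ.1 i j :=
    fun i j => (continuous_apply j).comp ((continuous_apply i).comp continuous_subtype_val)
  unfold gam
  simp only [starRingEnd_apply]
  exact ((continuous_finset_sum _ fun j _ =>
    (((hent j k).star.mul (hent j l)).mul (hent j m).star).mul (hent j n)).sub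
    continuous_const).sub continuous_const

lemma stmt19_gam_norm_le (Ψ : Matrix.unitaryGroup (Fin d) ℂ) (k l m n : Fin d) :
    ‖gam Ψ.1 k l m n‖ ≤ d + 2 := by
  have hb : ∀ i j, ‖Ψ.1 i j‖ ≤ 1 := fun i j => entry_norm_bound_of_unitary Ψ.2 i j
  have h1 : ‖∑ j, (starRingEnd ℂ) (Ψ.1 j k) * Ψ.1 j l * (starRingEnd ℂ) (Ψ.1 j m) * Ψ.1 j n‖
      ≤ d := by
    calc ‖∑ j, (starRingEnd ℂ) (Ψ.1 j k) * Ψ.1 j l * (starRingEnd ℂ) (Ψ.1 j m) * Ψ.1 j n‖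
        ≤ ∑ j : Fin d, ‖(starRingEnd ℂ) (Ψ.1 j k) * Ψ.1 j l *
            (starRingEnd ℂ) (Ψ.1 j m) * Ψ.1 j n‖ := norm_sum_le _ _
      _ ≤ ∑ _j : Fin d, 1 := by
          apply Finset.sum_le_sum
          intro j _
          simp only [norm_mul, RCLike.norm_conj]
          calc ‖Ψ.1 j k‖ * ‖Ψ.1 j l‖ * ‖Ψ.1 j m‖ * ‖Ψ.1 j n‖ ≤ 1 * 1 * 1 * 1 := by
                gcongr <;> [exact hb j k; exact hb j l; exact hb j m; exact hb j n]
            _ = 1 := by ring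
      _ = d := by simp
  have h2 : ∀ (c : Prop) [Decidable c], ‖(1 / (d : ℂ)) * (if c then (1:ℂ) else 0)‖ ≤ 1 := by
    intro c _
    rcases eq_or_ne d 0 with h | h
    · simp [h]
    · split
      · rw [mul_one, norm_div, norm_one, Complex.norm_natCast]
        rw [div_le_one (by exact_mod_cast Nat.pos_of_ne_zero h)]
        exact_mod_cast Nat.one_le_iff_ne_zero.mpr h
      · simp
  unfold gam
  calc ‖_ - (1 / (d : ℂ)) * (if k = n ∧ l = m then (1:ℂ) else 0)‖
      ≤ ‖(∑ j, (starRingEnd ℂ) (Ψ.1 j k) * Ψ.1 j l * (starRingEnd ℂ) (Ψ.1 j m) * Ψ.1 j n) -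
          (1 / (d : ℂ)) * (if k = l ∧ m = n then (1:ℂ) else 0)‖ +
        ‖(1 / (d : ℂ)) * (if k = n ∧ l = m then (1:ℂ) else 0)‖ := norm_sub_le _ _
    _ ≤ (‖∑ j, (starRingEnd ℂ) (Ψ.1 j k) * Ψ.1 j l * (starRingEnd ℂ) (Ψ.1 j m) * Ψ.1 j n‖ +
        ‖(1 / (d : ℂ)) * (if k = l ∧ m = n then (1:ℂ) else 0)‖) + _ := by
        gcongr
        exact norm_sub_le _ _
    _ ≤ (d + 1) + 1 := by gcongr <;> first | exact h1 | exact h2 _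
    _ = d + 2 := by ring

lemma stmt19_exists_phase (k l m n : Fin d) (h1 : ¬(k = l ∧ m = n)) (h2 : ¬(k = n ∧ l = m)) :
    ∃ p : Fin d,
      (starRingEnd ℂ) (if k = p then Complex.I else 1) * (if l = p then Complex.I else 1) *
        (starRingEnd ℂ) (if m = p then Complex.I else 1) * (if n = p then Complex.I else 1)
        ≠ 1 := by
  by_cases hkl : k = l
  · subst hkl
    have hmn : m ≠ n := fun h => h1 ⟨rfl, h⟩
    refine ⟨m, ?_⟩
    by_cases hkm : k = m <;> simp [hkm, hmn.symm, Complex.ext_iff]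
  · by_cases hml : m = l
    · subst hml
      have hkn : k ≠ n := fun h => h2 ⟨h, rfl⟩
      refine ⟨n, ?_⟩
      by_cases hmn : m = n <;> simp [hkn, hmn, Complex.ext_iff]
    · refine ⟨l, ?_⟩
      by_cases hnl : n = l <;>
        simp [hkl, hml, hnl, (Ne.symm hkl), (Ne.symm hml), Complex.ext_iff] <;> norm_num

lemma stmt19_gam_conj_self (Ψ : Matrix (Fin d) (Fin d) ℂ) (k l m n : Fin d)
    (h : (k = l ∧ m = n) ∨ (k = n ∧ l = m)) :
    (starRingEnd ℂ) (gam Ψ k l m n) = gam Ψ k l m n := by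
  rcases h with ⟨rfl, rfl⟩ | ⟨rfl, rfl⟩
  · have hs : (starRingEnd ℂ)
        (∑ j, (starRingEnd ℂ) (Ψ j k) * Ψ j k * (starRingEnd ℂ) (Ψ j m) * Ψ j m)
        = ∑ j, (starRingEnd ℂ) (Ψ j k) * Ψ j k * (starRingEnd ℂ) (Ψ j m) * Ψ j m := by
      rw [map_sum]
      exact Finset.sum_congr rfl fun j _ => by
        simp only [map_mul, Complex.conj_conj]; ring
    simp only [gam, map_sub, map_mul, map_div₀, map_one, Complex.conj_natCast, hs, apply_ite,
      map_zero]
    split_ifs <;> first | rfl | (exfalso; simp_all)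
  · have hs : (starRingEnd ℂ)
        (∑ j, (starRingEnd ℂ) (Ψ j k) * Ψ j l * (starRingEnd ℂ) (Ψ j l) * Ψ j k)
        = ∑ j, (starRingEnd ℂ) (Ψ j k) * Ψ j l * (starRingEnd ℂ) (Ψ j l) * Ψ j k := by
      rw [map_sum]
      exact Finset.sum_congr rfl fun j _ => by
        simp only [map_mul, Complex.conj_conj]; ring
    simp only [gam, map_sub, map_mul, map_div₀, map_one, Complex.conj_natCast, hs, apply_ite,
      map_zero]
    split_ifs <;> first | rfl | (exfalso; simp_all)

variable [MeasurableSpace (Matrix.unitaryGroup (Fin d) ℂ)]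
  [BorelSpace (Matrix.unitaryGroup (Fin d) ℂ)]
  (P : Measure (Matrix.unitaryGroup (Fin d) ℂ)) [IsProbabilityMeasure P]

lemma stmt19_gam_integrable (k l m n : Fin d) :
    Integrable (fun Ψ : Matrix.unitaryGroup (Fin d) ℂ => gam Ψ.1 k l m n) P :=
  ⟨(stmt19_gam_continuous k l m n).measurable.aestronglyMeasurable,
    HasFiniteIntegral.of_bounded (C := d + 2)
      (Filter.Eventually.of_forall fun Ψ => stmt19_gam_norm_le Ψ k l m n)⟩

lemma stmt19_right_inv
    (hP : ∀ g : Matrix.unitaryGroup (Fin d) ℂ, P.map (fun x => g * x) = P)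
    (g : Matrix.unitaryGroup (Fin d) ℂ) :
    P.map (fun x => x * g) = P := by
  haveI : P.IsMulLeftInvariant := ⟨hP⟩
  haveI : P.IsHaarMeasure := by constructor
  set Q := P.map (fun x => x * g) with hQ
  have hmr : Measurable (fun x : Matrix.unitaryGroup (Fin d) ℂ => x * g) :=
    measurable_mul_const g
  haveI : IsProbabilityMeasure Q := Measure.isProbabilityMeasure_map hmr.aemeasurable
  haveI : Q.IsMulLeftInvariant := by
    constructor
    intro h
    rw [hQ, Measure.map_map (measurable_const_mul h) hmr]
    have : ((h * ·) ∘ fun x => x * g) = (fun x => x * g) ∘ (h * ·) := by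
      funext x; simp [mul_assoc]
    rw [this, ← Measure.map_map hmr (measurable_const_mul h), hP h]
  haveI : Q.IsHaarMeasure := by constructor
  exact Measure.isHaarMeasure_eq_of_isProbabilityMeasure Q P

lemma stmt19_gam_integral_eq_zero
    (hP : ∀ g : Matrix.unitaryGroup (Fin d) ℂ, P.map (fun x => g * x) = P)
    (k l m n : Fin d) (h1 : ¬(k = l ∧ m = n)) (h2 : ¬(k = n ∧ l = m)) :
    ∫ Ψ, gam Ψ.1 k l m n ∂P = 0 := by
  obtain ⟨p, hz⟩ := stmt19_exists_phase k l m n h1 h2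
  set u : Fin d → ℂ := fun q => if q = p then Complex.I else 1 with hu_def
  set z : ℂ := (starRingEnd ℂ) (u k) * u l * (starRingEnd ℂ) (u m) * u n with hz_def
  have hz1 : z ≠ 1 := hz
  have hmem : Matrix.diagonal u ∈ Matrix.unitaryGroup (Fin d) ℂ := by
    rw [Matrix.mem_unitaryGroup_iff]
    have hst : star (Matrix.diagonal u) = Matrix.diagonal (star u) :=
      Matrix.diagonal_conjTranspose u
    have huu : u * star u = 1 := by
      funext q
      simp only [Pi.mul_apply, Pi.star_apply, Pi.one_apply, hu_def]
      by_cases h : q = p <;> simp [h, Complex.conj_I, Complex.I_mul_I]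
    rw [hst, Matrix.diagonal_mul_diagonal,
      show (fun i => u i * star u i) = u * star u from rfl, huu]
    exact Matrix.diagonal_one
  set D : Matrix.unitaryGroup (Fin d) ℂ := ⟨Matrix.diagonal u, hmem⟩ with hD
  have key : ∀ Ψ : Matrix.unitaryGroup (Fin d) ℂ,
      gam ((Ψ * D).1) k l m n = z * gam Ψ.1 k l m n := by
    intro Ψ
    have hent : ∀ i q, (Ψ * D).1 i q = Ψ.1 i q * u q := by
      intro i q
      show (Ψ.1 * Matrix.diagonal u) i q = _
      rw [Matrix.mul_diagonal]
    simp only [gam, hent, h1, h2, if_false, mul_zero, sub_zero, Finset.mul_sum]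
    exact Finset.sum_congr rfl fun j _ => by simp only [map_mul]; ring
  have hmr : Measurable (fun x : Matrix.unitaryGroup (Fin d) ℂ => x * D) :=
    measurable_mul_const D
  have hmap : ∫ Ψ, gam Ψ.1 k l m n ∂P = ∫ Ψ, gam ((Ψ * D).1) k l m n ∂P := by
    conv_lhs => rw [← stmt19_right_inv P hP D]
    rw [integral_map hmr.aemeasurable
      ((stmt19_gam_continuous k l m n).measurable.aestronglyMeasurable)]
  have hstep : ∫ Ψ, gam ((Ψ * D).1) k l m n ∂P = z * ∫ Ψ, gam Ψ.1 k l m n ∂P := by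
    simp only [key]
    exact integral_const_mul z _
  have hthis : ∫ Ψ, gam Ψ.1 k l m n ∂P = z * ∫ Ψ, gam Ψ.1 k l m n ∂P := hmap.trans hstep
  have h0 : (1 - z) * ∫ Ψ, gam Ψ.1 k l m n ∂P = 0 := by
    rw [sub_mul, one_mul, ← hthis, sub_self]
  rcases mul_eq_zero.mp h0 with h | h
  · exact absurd (by linear_combination -h : z = 1) hz1
  · exact h

end Aux

/-- The quartic (first Duhamel iterate) contribution to `E|a_k(t)|²` vanishes:
`Re(conj(A(k/N)) E[f¹_k(t)]) = 0`, where `f¹` is the first Duhamel iterate profile built from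
the Haar eigenvector matrix `Ψ`, the eigenvalues `λ` and the data `A`. -/
theorem stmt19 (N : ℕ) (hN : 1 ≤ N) (μ : ℝ) (hμ : 0 < μ) (t : ℝ)
    (lam : Fin (2 * N + 1) → ℝ) (A : ℝ → ℂ)
    [MeasurableSpace (Matrix.unitaryGroup (Fin (2 * N + 1)) ℂ)]
    [BorelSpace (Matrix.unitaryGroup (Fin (2 * N + 1)) ℂ)]
    (P : Measure (Matrix.unitaryGroup (Fin (2 * N + 1)) ℂ)) [IsProbabilityMeasure P]
    (hP : ∀ g : Matrix.unitaryGroup (Fin (2 * N + 1)) ℂ, P.map (fun x => g * x) = P)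
    (k : Fin (2 * N + 1)) :
    ((starRingEnd ℂ) (A (((k : ℕ) - (N : ℝ)) / N)) *
      ∫ Ψ, (-Complex.I * ((μ ^ 2 / (N : ℝ) : ℝ) : ℂ) *
        ∑ l : Fin (2 * N + 1), ∑ m : Fin (2 * N + 1), ∑ n : Fin (2 * N + 1),
          (∫ s in (0 : ℝ)..t,
            Complex.exp (Complex.I * (s : ℂ) *
              ((lam k - lam l + lam m - lam n : ℝ) : ℂ))) *
            gam Ψ.1 k l m n * A (((l : ℕ) - (N : ℝ)) / N) *
            (starRingEnd ℂ) (A (((m : ℕ) - (N : ℝ)) / N)) *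
            A (((n : ℕ) - (N : ℝ)) / N)) ∂P).re = 0 := by
  set a : Fin (2 * N + 1) → ℂ := fun l => A (((l : ℕ) - (N : ℝ)) / N) with ha
  set T : Fin (2 * N + 1) → Fin (2 * N + 1) → Fin (2 * N + 1) → ℂ := fun l m n =>
    ∫ s in (0 : ℝ)..t, Complex.exp (Complex.I * (s : ℂ) *
      ((lam k - lam l + lam m - lam n : ℝ) : ℂ)) with hT
  set Gi : Fin (2 * N + 1) → Fin (2 * N + 1) → Fin (2 * N + 1) → ℂ := fun l m n => ∫ Ψ, gam Ψ.1 k l m n ∂P with hGi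
  have hterm : ∀ l m n : Fin (2 * N + 1), Integrable (fun Ψ : Matrix.unitaryGroup (Fin (2 * N + 1)) ℂ =>
      T l m n * gam Ψ.1 k l m n * a l * (starRingEnd ℂ) (a m) * a n) P := by
    intro l m n
    exact ((((stmt19_gam_integrable P k l m n).const_mul (T l m n)).mul_const
      (a l)).mul_const ((starRingEnd ℂ) (a m))).mul_const (a n)
  have hI : (∫ Ψ, (∑ l : Fin (2 * N + 1), ∑ m : Fin (2 * N + 1), ∑ n : Fin (2 * N + 1),
        T l m n * gam Ψ.1 k l m n * a l * (starRingEnd ℂ) (a m) * a n) ∂P)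
      = ∑ l : Fin (2 * N + 1), ∑ m : Fin (2 * N + 1), ∑ n : Fin (2 * N + 1),
        T l m n * Gi l m n * a l * (starRingEnd ℂ) (a m) * a n := by
    rw [integral_finset_sum _ (fun l _ => integrable_finset_sum _
      (fun m _ => integrable_finset_sum _ (fun n _ => hterm l m n)))]
    refine Finset.sum_congr rfl fun l _ => ?_
    rw [integral_finset_sum _ (fun m _ => integrable_finset_sum _ (fun n _ => hterm l m n))]
    refine Finset.sum_congr rfl fun m _ => ?_
    rw [integral_finset_sum _ (fun n _ => hterm l m n)]
    refine Finset.sum_congr rfl fun n _ => ?_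
    have hcomm : ∀ Ψ : Matrix.unitaryGroup (Fin (2 * N + 1)) ℂ,
        T l m n * gam Ψ.1 k l m n * a l * (starRingEnd ℂ) (a m) * a n
        = (T l m n * a l * (starRingEnd ℂ) (a m) * a n) * gam Ψ.1 k l m n := fun Ψ => by ring
    simp_rw [hcomm, integral_const_mul]
    rw [hGi]
    ring
  have him : ((starRingEnd ℂ) (a k) * ∑ l : Fin (2 * N + 1), ∑ m : Fin (2 * N + 1), ∑ n : Fin (2 * N + 1),
      T l m n * Gi l m n * a l * (starRingEnd ℂ) (a m) * a n).im = 0 := by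
    simp only [Finset.mul_sum, Complex.im_sum]
    refine Finset.sum_eq_zero fun l _ => Finset.sum_eq_zero fun m _ =>
      Finset.sum_eq_zero fun n _ => ?_
    by_cases hc1 : k = l ∧ m = n
    · obtain ⟨h1, h2⟩ := hc1
      subst h1; subst h2
      have hT0 : T k m m = (t : ℂ) := by
        rw [hT]
        have : ((lam k - lam k + lam m - lam m : ℝ) : ℂ) = 0 := by
          norm_num
        simp [this]
      have hGiconj : (starRingEnd ℂ) (Gi k m m) = Gi k m m := by
        rw [hGi, ← integral_conj]
        exact integral_congr_ae (Filter.Eventually.of_forall fun Ψ =>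
          stmt19_gam_conj_self Ψ.1 k k m m (Or.inl ⟨rfl, rfl⟩))
      apply Complex.conj_eq_iff_im.mp
      simp only [map_mul, Complex.conj_conj, hGiconj, hT0, Complex.conj_ofReal]
      ring
    · by_cases hc2 : k = n ∧ l = m
      · obtain ⟨h1, h2⟩ := hc2
        subst h1; subst h2
        have hT0 : T l l k = (t : ℂ) := by
          rw [hT]
          have : ((lam k - lam l + lam l - lam k : ℝ) : ℂ) = 0 := by
            norm_num
          simp [this]
        have hGiconj : (starRingEnd ℂ) (Gi l l k) = Gi l l k := by
          rw [hGi, ← integral_conj]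
          exact integral_congr_ae (Filter.Eventually.of_forall fun Ψ =>
            stmt19_gam_conj_self Ψ.1 k l l k (Or.inr ⟨rfl, rfl⟩))
        apply Complex.conj_eq_iff_im.mp
        simp only [map_mul, Complex.conj_conj, hGiconj, hT0, Complex.conj_ofReal]
        ring
      · have : Gi l m n = 0 := stmt19_gam_integral_eq_zero P hP k l m n hc1 hc2
        simp [this]
  rw [integral_const_mul, hI]
  have hre : (starRingEnd ℂ) (a k) *
      (-Complex.I * ((μ ^ 2 / (N : ℝ) : ℝ) : ℂ) *
        ∑ l : Fin (2 * N + 1), ∑ m : Fin (2 * N + 1), ∑ n : Fin (2 * N + 1),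
          T l m n * Gi l m n * a l * (starRingEnd ℂ) (a m) * a n)
      = -Complex.I * (((μ ^ 2 / (N : ℝ) : ℝ) : ℂ) *
        ((starRingEnd ℂ) (a k) * ∑ l : Fin (2 * N + 1), ∑ m : Fin (2 * N + 1), ∑ n : Fin (2 * N + 1),
          T l m n * Gi l m n * a l * (starRingEnd ℂ) (a m) * a n)) := by ring
  rw [hre]
  set w : ℂ := (starRingEnd ℂ) (a k) * ∑ l : Fin (2 * N + 1), ∑ m : Fin (2 * N + 1),
    ∑ n : Fin (2 * N + 1), T l m n * Gi l m n * a l * (starRingEnd ℂ) (a m) * a n with hw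
  have hfin : (-Complex.I * (((μ ^ 2 / (N : ℝ) : ℝ) : ℂ) * w)).re
      = (μ ^ 2 / (N : ℝ)) * w.im := by
    rw [neg_mul, Complex.neg_re, Complex.mul_re, Complex.I_re, Complex.I_im, Complex.mul_im,
      Complex.ofReal_re, Complex.ofReal_im]
    ring
  rw [hfin, him, mul_zero]
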